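/- Let D be a G-admissible divisor on H. Then for every G-admissible divisor D′ on H linearly equivalent to D, there exist an integer N and a sequence v₁, …, v_N of vertices of G such that D′ = M_{v_N}(⋯ (M_{v_1}(D)) ⋯), i.e., D′ is obtained from D by a finite sequence of G-admissible chip-firing moves. -/

import Mathlib

open Finset
open scoped Classical

structure Multigraph (V E : Type) where
  tail : E → V
  head : E → V
  loopless : ∀ e, tail e ≠ head e

namespace Multigraph

variable {V E : Type}

/-- The simple graph of adjacency underlying a multigraph. -/
def adjG (G : Multigraph V E) : SimpleGraph V :=
  SimpleGraph.fromRel (fun u v => ∃ e, G.tail e = u ∧ G.head e = v)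

/-- A multigraph is connected if its adjacency graph is. -/
def Conn (G : Multigraph V E) : Prop := G.adjG.Connected

end Multigraph

variable {V E : Type} [Fintype V] [Fintype E] [DecidableEq V] [DecidableEq E]

/-- The vertex set of the subdivision `H` of `G`: the vertices of `G` together with,
for each edge `e`, the `ℓ e − 1` interior vertices `x_1^e, …, x_{ℓ_e − 1}^e` of the
subdivision of `e` (the pair `⟨e, j⟩` encodes `x_{j+1}^e`, indexed along the reference
orientation of `e`). -/
abbrev VH (V E : Type) (ℓ : E → ℕ) := V ⊕ (Σ e : E, Fin (ℓ e - 1))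

/-- The vertex `x_j^e` of `H` (along the reference orientation of `e`),
for `0 ≤ j ≤ ℓ e`. -/
def xv (G : Multigraph V E) (ℓ : E → ℕ) (e : E) (j : ℕ) : VH V E ℓ :=
  if h : j = 0 then Sum.inl (G.tail e)
  else if h2 : j < ℓ e then Sum.inr ⟨e, ⟨j - 1, by omega⟩⟩
  else Sum.inl (G.head e)

/-- The principal divisor `div(F)` on `H` of a function `F : V(H) → ℤ`; its value at a
vertex `w` is `ord_w(F) = Σ (F(u) − F(w))`, the sum being over the edges of `H` between
`u` and `w`. The edges of `H` are the pairs `{x_j^e, x_{j+1}^e}` for `0 ≤ j < ℓ e`. -/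
def divH (G : Multigraph V E) (ℓ : E → ℕ) (F : VH V E ℓ → ℤ) (w : VH V E ℓ) : ℤ :=
  ∑ e : E, ∑ j ∈ Finset.range (ℓ e),
    ((if xv G ℓ e j = w then F (xv G ℓ e (j + 1)) - F (xv G ℓ e j) else 0) +
     (if xv G ℓ e (j + 1) = w then F (xv G ℓ e j) - F (xv G ℓ e (j + 1)) else 0))

/-- A divisor `D` on `H` is `G`-admissible if, for every edge `e` of `G`, `D` vanishes
at all interior vertices of the subdivision of `e`, except at most one where it
takes the value `1`. -/
def GAdm (G : Multigraph V E) (ℓ : E → ℕ) (D : VH V E ℓ → ℤ) : Prop :=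
  ∀ e : E,
    (∀ j : Fin (ℓ e - 1), D (Sum.inr ⟨e, j⟩) = 0) ∨
    (∃ j : Fin (ℓ e - 1), D (Sum.inr ⟨e, j⟩) = 1 ∧
      ∀ j' : Fin (ℓ e - 1), j' ≠ j → D (Sum.inr ⟨e, j'⟩) = 0)

/-- Membership in the cut `C_v(D)` of a `G`-admissible divisor `D` at a vertex `v` of
`G`: it contains `v` itself and, for each oriented edge `e` with tail `v`, the interior
vertices `x_i^e` with `1 ≤ i ≤ j_e(v)`, where `j_e(v)` is the position of the (unique)
interior vertex of `e` where `D` takes the value `1` (and `j_e(v) = 0` if there is none).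
(The pair `⟨e, j⟩` encodes the interior vertex at position `j+1` along the reference
orientation of `e`.) -/
def inCutAt (G : Multigraph V E) (ℓ : E → ℕ) (D : VH V E ℓ → ℤ) (v : V) :
    VH V E ℓ → Prop := fun w =>
  match w with
  | Sum.inl u => u = v
  | Sum.inr p =>
      (G.tail p.1 = v ∧ ∃ j : Fin (ℓ p.1 - 1), D (Sum.inr ⟨p.1, j⟩) = 1 ∧ p.2 ≤ j) ∨
      (G.head p.1 = v ∧ ∃ j : Fin (ℓ p.1 - 1), D (Sum.inr ⟨p.1, j⟩) = 1 ∧ j ≤ p.2)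

/-- The `G`-admissible chip-firing move of `D` at `v`:
`M_v(D) = D + div(χ_{C_v(D)})`. -/
noncomputable def Mv (G : Multigraph V E) (ℓ : E → ℕ) (D : VH V E ℓ → ℤ) (v : V) :
    VH V E ℓ → ℤ := fun w =>
  D w + divH G ℓ (fun w' => if inCutAt G ℓ D v w' then 1 else 0) w

/-! ### Pure sequence lemmas -/

def admPat (L : ℕ) (d : ℕ → ℤ) : Prop :=
  (∀ t, 1 ≤ t → t ≤ L - 1 → d t = 0) ∨
  (∃ j, 1 ≤ j ∧ j ≤ L - 1 ∧ d j = 1 ∧ ∀ t, 1 ≤ t → t ≤ L - 1 → t ≠ j → d t = 0)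

lemma tele (F : ℕ → ℤ) (a b : ℕ) (h : a ≤ b) :
    ∑ t ∈ Finset.Ico a b, (F (t + 1) - F t) = F b - F a := by
  induction b, h using Nat.le_induction with
  | base => simp
  | succ b hb ih =>
      rw [Finset.sum_Ico_succ_top (by omega), ih]; ring

lemma admPat_sum_le {L : ℕ} {d : ℕ → ℤ} (h : admPat L d) (a b : ℕ) (hb : b ≤ L - 1) :
    ∑ t ∈ Finset.Ico a b, d (t + 1) ≤ 1 := by
  rcases h with h | ⟨j, hj1, hj2, hdj, h0⟩
  · have : ∑ t ∈ Finset.Ico a b, d (t + 1) = 0 := by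
      apply Finset.sum_eq_zero
      intro t ht
      rw [Finset.mem_Ico] at ht
      exact h (t + 1) (by omega) (by omega)
    omega
  · have : ∑ t ∈ Finset.Ico a b, d (t + 1)
        = ∑ t ∈ Finset.Ico a b, (if t = j - 1 then (1 : ℤ) else 0) := by
      apply Finset.sum_congr rfl
      intro t ht
      rw [Finset.mem_Ico] at ht
      by_cases he : t = j - 1
      · have ht1 : t + 1 = j := by omega
        rw [if_pos he, ht1, hdj]
      · rw [if_neg he]
        exact h0 (t + 1) (by omega) (by omega) (by omega)
    rw [this, Finset.sum_ite_eq' (Finset.Ico a b) (j-1) (fun _ => (1:ℤ))]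
    split <;> omega

lemma admPat_sum_nonneg {L : ℕ} {d : ℕ → ℤ} (h : admPat L d) (a b : ℕ) (hb : b ≤ L - 1) :
    0 ≤ ∑ t ∈ Finset.Ico a b, d (t + 1) := by
  apply Finset.sum_nonneg
  intro t ht
  rw [Finset.mem_Ico] at ht
  rcases h with h | ⟨j, hj1, hj2, hdj, h0⟩
  · rw [h (t+1) (by omega) (by omega)]
  · by_cases he : t + 1 = j
    · rw [he, hdj]; omega
    · rw [h0 (t+1) (by omega) (by omega) he]

lemma slope_diff {L : ℕ} {g d d' : ℕ → ℤ}
    (hsd : ∀ t, 1 ≤ t → t ≤ L - 1 → g (t + 1) + g (t - 1) - 2 * g t = d' t - d t)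
    (a b : ℕ) (hab : a ≤ b) (hb : b ≤ L - 1) :
    (g (b + 1) - g b) - (g (a + 1) - g a)
      = ∑ t ∈ Finset.Ico a b, (d' (t + 1) - d (t + 1)) := by
  have := tele (fun t => g (t+1) - g t) a b hab
  rw [← this]
  apply Finset.sum_congr rfl
  intro t ht
  rw [Finset.mem_Ico] at ht
  have h := hsd (t + 1) (by omega) (by omega)
  have e1 : t + 1 + 1 = t + 2 := by omega
  have e2 : t + 1 - 1 = t := by omega
  rw [e1, e2] at h
  linarith

lemma seqA {L : ℕ} {g d d' : ℕ → ℤ}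
    (hsd : ∀ t, 1 ≤ t → t ≤ L - 1 → g (t + 1) + g (t - 1) - 2 * g t = d' t - d t)
    (hg : ∀ t, 0 ≤ g t)
    (hd : admPat L d) (hd' : admPat L d')
    (hg0 : g 0 = 0) (hgl : g L = 0)
    (m : ℕ) (hm : m ≤ L) (h1 : 1 ≤ g m) : False := by
  have hm0 : m ≠ 0 := by rintro rfl; omega
  have hmL : m ≠ L := by rintro rfl; omega
  -- a with slope ≥ 1 before m
  have ha : ∃ a, a < m ∧ 1 ≤ g (a + 1) - g a := by
    by_contra hc
    push_neg at hc
    have : ∑ t ∈ Finset.Ico 0 m, (g (t+1) - g t) ≤ 0 := by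
      apply Finset.sum_nonpos
      intro t ht
      rw [Finset.mem_Ico] at ht
      have := hc t ht.2
      omega
    rw [tele g 0 m (by omega)] at this
    omega
  -- b with slope ≤ -1 from m on
  have hb : ∃ b, m ≤ b ∧ b < L ∧ g (b + 1) - g b ≤ -1 := by
    by_contra hc
    push_neg at hc
    have : 0 ≤ ∑ t ∈ Finset.Ico m L, (g (t+1) - g t) := by
      apply Finset.sum_nonneg
      intro t ht
      rw [Finset.mem_Ico] at ht
      have := hc t ht.1 ht.2
      omega
    rw [tele g m L (by omega)] at this
    omega
  obtain ⟨a, ham, hsa⟩ := ha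
  obtain ⟨b, hmb, hbL, hsb⟩ := hb
  have hab : a ≤ b := by omega
  have hbl : b ≤ L - 1 := by omega
  have hdiff := slope_diff hsd a b hab hbl
  have hsum : ∑ t ∈ Finset.Ico a b, (d' (t + 1) - d (t + 1))
      = (∑ t ∈ Finset.Ico a b, d' (t + 1)) - ∑ t ∈ Finset.Ico a b, d (t + 1) :=
    Finset.sum_sub_distrib (fun t => d' (t + 1)) (fun t => d (t + 1))
  have h1' := admPat_sum_nonneg hd' a b hbl
  have h2' := admPat_sum_le hd a b hbl
  rw [hsum] at hdiff
  omega

lemma seqB {L : ℕ} {g d d' : ℕ → ℤ}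
    (hsd : ∀ t, 1 ≤ t → t ≤ L - 1 → g (t + 1) + g (t - 1) - 2 * g t = d' t - d t)
    (hg : ∀ t, 0 ≤ g t)
    (hd' : admPat L d')
    (j : ℕ) (hj1 : 1 ≤ j) (hj2 : j ≤ L - 1) (hdj : d j = 1)
    (hd0 : ∀ t, 1 ≤ t → t ≤ L - 1 → t ≠ j → d t = 0)
    (hg0 : 1 ≤ g 0) :
    ∀ t, 1 ≤ t → t ≤ j → 1 ≤ g t := by
  by_contra hc
  push_neg at hc
  obtain ⟨t₀, ht1, ht2, ht3⟩ := hc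
  have hgt0 : g t₀ = 0 := by have := hg t₀; omega
  have hd : admPat L d := Or.inr ⟨j, hj1, hj2, hdj, hd0⟩
  -- a slope ≤ -1 before t₀
  have ha : ∃ a, a < t₀ ∧ g (a + 1) - g a ≤ -1 := by
    by_contra hcc
    push_neg at hcc
    have : 0 ≤ ∑ t ∈ Finset.Ico 0 t₀, (g (t+1) - g t) := by
      apply Finset.sum_nonneg
      intro t ht
      rw [Finset.mem_Ico] at ht
      have := hcc t ht.2
      omega
    rw [tele g 0 t₀ (by omega)] at this
    omega
  obtain ⟨a, hat, hsa⟩ := ha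
  -- slopes ≤ 0 on [a, j-1]
  have hslope : ∀ t, a ≤ t → t ≤ j - 1 → g (t + 1) - g t ≤ 0 := by
    intro t hta htj
    have hdiff := slope_diff hsd a t hta (by omega)
    have hsum : ∑ u ∈ Finset.Ico a t, (d' (u + 1) - d (u + 1))
        = (∑ u ∈ Finset.Ico a t, d' (u + 1)) - ∑ u ∈ Finset.Ico a t, d (u + 1) :=
      Finset.sum_sub_distrib (fun u => d' (u + 1)) (fun u => d (u + 1))
    have h1' := admPat_sum_le hd' a t (by omega)
    have h2' : 0 ≤ ∑ u ∈ Finset.Ico a t, d (u + 1) := admPat_sum_nonneg hd a t (by omega)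
    rw [hsum] at hdiff
    omega
  -- g j = 0
  have hgj : g j = 0 := by
    have : ∑ t ∈ Finset.Ico t₀ j, (g (t+1) - g t) ≤ 0 := by
      apply Finset.sum_nonpos
      intro t ht
      rw [Finset.mem_Ico] at ht
      exact hslope t (by omega) (by omega)
    rw [tele g t₀ j (by omega)] at this
    have := hg j
    omega
  -- second difference at j
  have hsdj := hsd j hj1 hj2
  rw [hgj] at hsdj
  have hdj' : d' j = 1 ∧ g (j+1) = 0 ∧ g (j-1) = 0 := by
    have h1 := hg (j+1)
    have h2 := hg (j-1)
    have h3 : d' j ≤ 1 := by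
      rcases hd' with h | ⟨j', _, _, hdj', h0⟩
      · rw [h j hj1 hj2]; omega
      · by_cases he : j = j'
        · rw [he, hdj']
        · rw [h0 j hj1 hj2 he]; omega
    constructor
    · omega
    · constructor <;> omega
  obtain ⟨hd'j, hgj1, hgjm1⟩ := hdj'
  have hd'0 : ∀ t, 1 ≤ t → t ≤ L - 1 → t ≠ j → d' t = 0 := by
    rcases hd' with h | ⟨j', _, _, hdj', h0⟩
    · intro t h1 h2 _; exact h t h1 h2
    · have : j' = j := by
        by_contra hne
        have := h0 j hj1 hj2 (by omega)
        omega
      subst this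
      exact h0
  -- descent: zeros propagate to 0
  have desc : ∀ k, k ≤ j - 1 → g (j - 1 - k) = 0 ∧ g (j - k) = 0 := by
    intro k
    induction k with
    | zero => intro _; simpa [hgj] using hgjm1
    | succ k ih =>
        intro hk
        obtain ⟨h1, h2⟩ := ih (by omega)
        set t := j - 1 - k with htdef
        have ht1 : 1 ≤ t := by omega
        have ht2 : t ≤ L - 1 := by omega
        have htj : t ≠ j := by omega
        have hsdt := hsd t ht1 ht2
        rw [hd'0 t ht1 ht2 htj, hd0 t ht1 ht2 htj] at hsdt
        have he1 : t + 1 = j - k := by omega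
        rw [he1, h2, h1] at hsdt
        have : g (t - 1) = 0 := by omega
        constructor
        · have : j - 1 - (k+1) = t - 1 := by omega
          rw [this]; assumption
        · have : j - (k+1) = t := by omega
          rw [this]; exact h1
  have := (desc (j-1) (le_refl _)).1
  rw [show j - 1 - (j-1) = 0 from by omega] at this
  omega


/-! ### Subdivision lemmas -/

section Graph

variable (G : Multigraph V E) (ℓ : E → ℕ)

lemma xv_zero (e : E) : xv G ℓ e 0 = Sum.inl (G.tail e) := by simp [xv]

lemma xv_top (e : E) (t : ℕ) (h0 : t ≠ 0) (h : ℓ e ≤ t) :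
    xv G ℓ e t = Sum.inl (G.head e) := by
  simp [xv, h0, not_lt.mpr h]

lemma xv_int (e : E) (t : ℕ) (h1 : 1 ≤ t) (h2 : t < ℓ e) :
    xv G ℓ e t = Sum.inr ⟨e, ⟨t - 1, by omega⟩⟩ := by
  unfold xv
  rw [dif_neg (by omega : ¬ t = 0), dif_pos h2]

lemma xv_eq_inr_iff (e : E) (i : Fin (ℓ e - 1)) (t : ℕ) :
    xv G ℓ e t = Sum.inr ⟨e, i⟩ ↔ t = (i : ℕ) + 1 := by
  have hi := i.isLt
  unfold xv
  split_ifs with h h2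
  · simp; omega
  · simp only [Sum.inr.injEq]
    rw [Sigma.mk.inj_iff]
    simp only [heq_eq_eq, true_and, Fin.ext_iff]
    omega
  · simp; omega

lemma xv_ne_of_ne {e e' : E} (h : e' ≠ e) (t : ℕ) (p : Fin (ℓ e - 1)) :
    xv G ℓ e' t ≠ Sum.inr ⟨e, p⟩ := by
  unfold xv
  split_ifs <;> simp [h]

lemma divH_interior (F : VH V E ℓ → ℤ) (e : E) (i : Fin (ℓ e - 1)) :
    divH G ℓ F (Sum.inr ⟨e, i⟩)
      = (F (xv G ℓ e ((i : ℕ) + 2)) - F (xv G ℓ e ((i : ℕ) + 1)))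
        + (F (xv G ℓ e (i : ℕ)) - F (xv G ℓ e ((i : ℕ) + 1))) := by
  have hi := i.isLt
  unfold divH
  rw [Finset.sum_eq_single e]
  · rw [Finset.sum_add_distrib]
    have h1 : ∑ j ∈ Finset.range (ℓ e),
        (if xv G ℓ e j = Sum.inr ⟨e, i⟩ then F (xv G ℓ e (j + 1)) - F (xv G ℓ e j) else 0)
        = F (xv G ℓ e ((i : ℕ) + 2)) - F (xv G ℓ e ((i : ℕ) + 1)) := by
      rw [Finset.sum_eq_single ((i : ℕ) + 1)]
      · rw [if_pos ((xv_eq_inr_iff G ℓ e i _).mpr rfl)]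
      · intro j _ hj
        rw [if_neg (fun hc => hj ((xv_eq_inr_iff G ℓ e i j).mp hc))]
      · intro hc
        exact absurd (Finset.mem_range.mpr (by omega)) hc
    have h2 : ∑ j ∈ Finset.range (ℓ e),
        (if xv G ℓ e (j + 1) = Sum.inr ⟨e, i⟩ then F (xv G ℓ e j) - F (xv G ℓ e (j + 1)) else 0)
        = F (xv G ℓ e (i : ℕ)) - F (xv G ℓ e ((i : ℕ) + 1)) := by
      rw [Finset.sum_eq_single ((i : ℕ))]
      · rw [if_pos ((xv_eq_inr_iff G ℓ e i _).mpr rfl)]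
      · intro j _ hj
        rw [if_neg (fun hc => hj (by have := (xv_eq_inr_iff G ℓ e i (j+1)).mp hc; omega))]
      · intro hc
        exact absurd (Finset.mem_range.mpr (by omega)) hc
    rw [h1, h2]
  · intro e' _ he'
    apply Finset.sum_eq_zero
    intro j _
    rw [if_neg (xv_ne_of_ne G ℓ he' j i), if_neg (xv_ne_of_ne G ℓ he' (j+1) i)]
    ring
  · intro hc
    exact absurd (Finset.mem_univ e) hc

lemma divH_add (F F' : VH V E ℓ → ℤ) (w : VH V E ℓ) :
    divH G ℓ (fun w' => F w' + F' w') w = divH G ℓ F w + divH G ℓ F' w := by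
  unfold divH
  rw [← Finset.sum_add_distrib]
  refine Finset.sum_congr rfl fun e _ => ?_
  rw [← Finset.sum_add_distrib]
  refine Finset.sum_congr rfl fun j _ => ?_
  split_ifs <;> ring

lemma divH_sub (F F' : VH V E ℓ → ℤ) (w : VH V E ℓ) :
    divH G ℓ (fun w' => F w' - F' w') w = divH G ℓ F w - divH G ℓ F' w := by
  unfold divH
  rw [← Finset.sum_sub_distrib]
  refine Finset.sum_congr rfl fun e _ => ?_
  rw [← Finset.sum_sub_distrib]
  refine Finset.sum_congr rfl fun j _ => ?_
  split_ifs <;> ring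

lemma divH_const (c : ℤ) (w : VH V E ℓ) : divH G ℓ (fun _ => c) w = 0 := by
  unfold divH
  apply Finset.sum_eq_zero
  intro e _
  apply Finset.sum_eq_zero
  intro j _
  split_ifs <;> ring


noncomputable def chiCut (G : Multigraph V E) (ℓ : E → ℕ) (D : VH V E ℓ → ℤ) (v : V) :
    VH V E ℓ → ℤ := fun w => if inCutAt G ℓ D v w then 1 else 0

lemma Mv_eq (D : VH V E ℓ → ℤ) (v : V) (w : VH V E ℓ) :
    Mv G ℓ D v w = D w + divH G ℓ (chiCut G ℓ D v) w := rfl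

lemma xv_coe (e : E) (i : Fin (ℓ e - 1)) : xv G ℓ e ((i : ℕ) + 1) = Sum.inr ⟨e, i⟩ :=
  (xv_eq_inr_iff G ℓ e i _).mpr rfl

lemma chiCut_inl (D : VH V E ℓ → ℤ) (v : V) (u : V) :
    chiCut G ℓ D v (Sum.inl u) = if u = v then 1 else 0 := by
  simp [chiCut, inCutAt]
  by_cases h : u = v <;> simp [h]

/-- translation of the admissibility pattern at an edge to a `ℕ`-indexed pattern -/
lemma adm_nat {A : VH V E ℓ → ℤ} {e : E}
    (h : (∀ j : Fin (ℓ e - 1), A (Sum.inr ⟨e, j⟩) = 0) ∨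
      (∃ j : Fin (ℓ e - 1), A (Sum.inr ⟨e, j⟩) = 1 ∧
        ∀ j' : Fin (ℓ e - 1), j' ≠ j → A (Sum.inr ⟨e, j'⟩) = 0)) :
    admPat (ℓ e) (fun t => A (xv G ℓ e t)) := by
  rcases h with h | ⟨j, hj, h0⟩
  · left
    intro t h1 h2
    dsimp only
    rw [xv_int G ℓ e t h1 (by omega)]
    exact h _
  · right
    refine ⟨(j : ℕ) + 1, by omega, by have := j.isLt; omega, ?_, ?_⟩
    · dsimp only
      rw [xv_coe]
      exact hj
    · intro t h1 h2 hne
      dsimp only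
      rw [xv_int G ℓ e t h1 (by omega)]
      apply h0
      intro hc
      have := congrArg Fin.val hc
      simp at this
      omega

lemma inCutAt_inr_elim {D : VH V E ℓ → ℤ} {v : V} {e : E} {p : Fin (ℓ e - 1)}
    (h : inCutAt G ℓ D v (Sum.inr ⟨e, p⟩)) :
    (G.tail e = v ∧ ∃ j : Fin (ℓ e - 1), D (Sum.inr ⟨e, j⟩) = 1 ∧ p ≤ j) ∨
    (G.head e = v ∧ ∃ j : Fin (ℓ e - 1), D (Sum.inr ⟨e, j⟩) = 1 ∧ j ≤ p) := h

lemma GAdm_Mv (D : VH V E ℓ → ℤ) (hD : GAdm G ℓ D) (v : V) : GAdm G ℓ (Mv G ℓ D v) := by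
  intro e
  set χ := chiCut G ℓ D v with hχ
  have hMv : ∀ i : Fin (ℓ e - 1), Mv G ℓ D v (Sum.inr ⟨e, i⟩)
      = D (Sum.inr ⟨e, i⟩)
        + ((χ (xv G ℓ e ((i:ℕ) + 2)) - χ (xv G ℓ e ((i:ℕ) + 1)))
          + (χ (xv G ℓ e (i:ℕ)) - χ (xv G ℓ e ((i:ℕ) + 1)))) := by
    intro i
    rw [Mv_eq, divH_interior]
  by_cases htv : G.tail e = v
  · have hhv : G.head e ≠ v := fun hc => G.loopless e (htv.trans hc.symm)
    rcases hD e with hz | ⟨jc, hjc, h0⟩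
    · -- tail at v, no chip on e
      have hin : ∀ p : Fin (ℓ e - 1), χ (Sum.inr ⟨e, p⟩) = 0 := by
        intro p
        rw [hχ]
        unfold chiCut
        rw [if_neg]
        intro hc
        have hc' : (G.tail e = v ∧ ∃ j : Fin (ℓ e - 1), D (Sum.inr ⟨e, j⟩) = 1 ∧ p ≤ j) ∨
            (G.head e = v ∧ ∃ j : Fin (ℓ e - 1), D (Sum.inr ⟨e, j⟩) = 1 ∧ j ≤ p) := hc
        rcases hc' with ⟨-, j', hj', -⟩ | ⟨hh, -⟩
        · rw [hz j'] at hj'; exact absurd hj' (by norm_num)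
        · exact hhv hh
      have hval : ∀ i : Fin (ℓ e - 1), Mv G ℓ D v (Sum.inr ⟨e, i⟩)
          = if (i : ℕ) = 0 then 1 else 0 := by
        intro i
        have hilt := i.isLt
        rw [hMv i, hz i]
        have h1 : χ (xv G ℓ e ((i:ℕ)+1)) = 0 := by rw [xv_coe]; exact hin i
        have h2 : χ (xv G ℓ e ((i:ℕ)+2)) = 0 := by
          by_cases hc : (i:ℕ) + 2 = ℓ e
          · rw [xv_top G ℓ e _ (by omega) (by omega), hχ, chiCut_inl, if_neg hhv]
          · rw [xv_int G ℓ e _ (by omega) (by omega)]; exact hin _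
        have h3 : χ (xv G ℓ e (i:ℕ)) = if (i:ℕ) = 0 then 1 else 0 := by
          by_cases hc : (i:ℕ) = 0
          · rw [hc, xv_zero, hχ, chiCut_inl, if_pos htv, if_pos rfl]
          · rw [xv_int G ℓ e _ (by omega) (by omega), if_neg hc]; exact hin _
        rw [h1, h2, h3]
        split_ifs <;> ring
      rcases Nat.eq_zero_or_pos (ℓ e - 1) with hL | hL
      · left; intro j; exact absurd j.isLt (by omega)
      · right
        refine ⟨⟨0, hL⟩, ?_, ?_⟩
        · rw [hval ⟨0, hL⟩]; norm_num
        · intro j' hne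
          rw [hval j', if_neg]
          intro hc
          exact hne (Fin.ext hc)
    · -- tail at v, chip at jc
      have hin : ∀ p : Fin (ℓ e - 1), χ (Sum.inr ⟨e, p⟩)
          = if (p:ℕ) ≤ (jc:ℕ) then 1 else 0 := by
        intro p
        rw [hχ]
        unfold chiCut
        by_cases hp : (p:ℕ) ≤ (jc:ℕ)
        · rw [if_pos hp, if_pos]
          exact Or.inl ⟨htv, jc, hjc, Fin.le_def.mpr hp⟩
        · rw [if_neg hp, if_neg]
          intro hc
          have hc' : (G.tail e = v ∧ ∃ j : Fin (ℓ e - 1), D (Sum.inr ⟨e, j⟩) = 1 ∧ p ≤ j) ∨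
              (G.head e = v ∧ ∃ j : Fin (ℓ e - 1), D (Sum.inr ⟨e, j⟩) = 1 ∧ j ≤ p) := hc
          rcases hc' with ⟨-, j', hj', hle⟩ | ⟨hh, -⟩
          · have : j' = jc := by
              by_contra hne
              rw [h0 j' hne] at hj'
              exact absurd hj' (by norm_num)
            subst this
            exact hp (Fin.le_def.mp hle)
          · exact hhv hh
      have hval : ∀ i : Fin (ℓ e - 1), Mv G ℓ D v (Sum.inr ⟨e, i⟩)
          = if (i : ℕ) = (jc:ℕ) + 1 then 1 else 0 := by
        intro i
        have hilt := i.isLt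
        have hjlt := jc.isLt
        have hd : D (Sum.inr ⟨e, i⟩) = if (i:ℕ) = (jc:ℕ) then 1 else 0 := by
          by_cases hc : i = jc
          · rw [hc, if_pos rfl]; exact hjc
          · rw [if_neg (fun hcc => hc (Fin.ext hcc))]; exact h0 i hc
        rw [hMv i, hd]
        have h1 : χ (xv G ℓ e ((i:ℕ)+1)) = if (i:ℕ) ≤ (jc:ℕ) then 1 else 0 := by
          rw [xv_coe]; exact hin i
        have h2 : χ (xv G ℓ e ((i:ℕ)+2)) = if (i:ℕ)+1 ≤ (jc:ℕ) then 1 else 0 := by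
          by_cases hc : (i:ℕ) + 2 = ℓ e
          · rw [xv_top G ℓ e _ (by omega) (by omega), hχ, chiCut_inl, if_neg hhv,
              if_neg (by omega)]
          · rw [xv_int G ℓ e _ (by omega) (by omega), hin]
            simp only [Fin.val_mk]
            split_ifs <;> omega
        have h3 : χ (xv G ℓ e (i:ℕ)) = if (i:ℕ) ≤ (jc:ℕ)+1 then 1 else 0 := by
          by_cases hc : (i:ℕ) = 0
          · rw [hc, xv_zero, hχ, chiCut_inl, if_pos htv, if_pos (by omega : (0:ℕ) ≤ (jc:ℕ)+1)]
          · rw [xv_int G ℓ e _ (by omega) (by omega), hin]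
            simp only [Fin.val_mk]
            split_ifs <;> omega
        rw [h1, h2, h3]
        split_ifs <;> omega
      by_cases htop : (jc:ℕ) + 1 < ℓ e - 1
      · right
        refine ⟨⟨(jc:ℕ)+1, htop⟩, ?_, ?_⟩
        · rw [hval]; simp
        · intro j' hne
          rw [hval j', if_neg]
          intro hc
          exact hne (Fin.ext hc)
      · left
        intro j
        rw [hval j, if_neg (by have := j.isLt; omega)]
  · by_cases hhv : G.head e = v
    · rcases hD e with hz | ⟨jc, hjc, h0⟩
      · -- head at v, no chip on e
        have hin : ∀ p : Fin (ℓ e - 1), χ (Sum.inr ⟨e, p⟩) = 0 := by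
          intro p
          rw [hχ]
          unfold chiCut
          rw [if_neg]
          intro hc
          have hc' : (G.tail e = v ∧ ∃ j : Fin (ℓ e - 1), D (Sum.inr ⟨e, j⟩) = 1 ∧ p ≤ j) ∨
              (G.head e = v ∧ ∃ j : Fin (ℓ e - 1), D (Sum.inr ⟨e, j⟩) = 1 ∧ j ≤ p) := hc
          rcases hc' with ⟨ht, -⟩ | ⟨-, j', hj', -⟩
          · exact htv ht
          · rw [hz j'] at hj'; exact absurd hj' (by norm_num)
        have hval : ∀ i : Fin (ℓ e - 1), Mv G ℓ D v (Sum.inr ⟨e, i⟩)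
            = if (i : ℕ) = ℓ e - 2 then 1 else 0 := by
          intro i
          have hilt := i.isLt
          rw [hMv i, hz i]
          have h1 : χ (xv G ℓ e ((i:ℕ)+1)) = 0 := by rw [xv_coe]; exact hin i
          have h2 : χ (xv G ℓ e ((i:ℕ)+2)) = if (i:ℕ) = ℓ e - 2 then 1 else 0 := by
            by_cases hc : (i:ℕ) + 2 = ℓ e
            · rw [xv_top G ℓ e _ (by omega) (by omega), hχ, chiCut_inl, if_pos hhv,
                if_pos (by omega)]
            · rw [xv_int G ℓ e _ (by omega) (by omega), if_neg (by omega)]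
              exact hin _
          have h3 : χ (xv G ℓ e (i:ℕ)) = 0 := by
            by_cases hc : (i:ℕ) = 0
            · rw [hc, xv_zero, hχ, chiCut_inl, if_neg htv]
            · rw [xv_int G ℓ e _ (by omega) (by omega)]; exact hin _
          rw [h1, h2, h3]
          split_ifs <;> ring
        rcases Nat.eq_zero_or_pos (ℓ e - 1) with hL | hL
        · left; intro j; exact absurd j.isLt (by omega)
        · right
          refine ⟨⟨ℓ e - 2, by omega⟩, ?_, ?_⟩
          · rw [hval]; simp
          · intro j' hne
            rw [hval j', if_neg]
            intro hc
            exact hne (Fin.ext (by simpa using hc))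
      · -- head at v, chip at jc
        have hin : ∀ p : Fin (ℓ e - 1), χ (Sum.inr ⟨e, p⟩)
            = if (jc:ℕ) ≤ (p:ℕ) then 1 else 0 := by
          intro p
          rw [hχ]
          unfold chiCut
          by_cases hp : (jc:ℕ) ≤ (p:ℕ)
          · rw [if_pos hp, if_pos]
            exact Or.inr ⟨hhv, jc, hjc, Fin.le_def.mpr hp⟩
          · rw [if_neg hp, if_neg]
            intro hc
            have hc' : (G.tail e = v ∧ ∃ j : Fin (ℓ e - 1), D (Sum.inr ⟨e, j⟩) = 1 ∧ p ≤ j) ∨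
                (G.head e = v ∧ ∃ j : Fin (ℓ e - 1), D (Sum.inr ⟨e, j⟩) = 1 ∧ j ≤ p) := hc
            rcases hc' with ⟨ht, -⟩ | ⟨-, j', hj', hle⟩
            · exact htv ht
            · have : j' = jc := by
                by_contra hne
                rw [h0 j' hne] at hj'
                exact absurd hj' (by norm_num)
              subst this
              exact hp (Fin.le_def.mp hle)
        have hval : ∀ i : Fin (ℓ e - 1), Mv G ℓ D v (Sum.inr ⟨e, i⟩)
            = if (i : ℕ) + 1 = (jc:ℕ) then 1 else 0 := by
          intro i
          have hilt := i.isLt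
          have hjlt := jc.isLt
          have hd : D (Sum.inr ⟨e, i⟩) = if (i:ℕ) = (jc:ℕ) then 1 else 0 := by
            by_cases hc : i = jc
            · rw [hc, if_pos rfl]; exact hjc
            · rw [if_neg (fun hcc => hc (Fin.ext hcc))]; exact h0 i hc
          rw [hMv i, hd]
          have h1 : χ (xv G ℓ e ((i:ℕ)+1)) = if (jc:ℕ) ≤ (i:ℕ) then 1 else 0 := by
            rw [xv_coe]; exact hin i
          have h2 : χ (xv G ℓ e ((i:ℕ)+2)) = if (jc:ℕ) ≤ (i:ℕ)+1 then 1 else 0 := by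
            by_cases hc : (i:ℕ) + 2 = ℓ e
            · rw [xv_top G ℓ e _ (by omega) (by omega), hχ, chiCut_inl, if_pos hhv,
                if_pos (by omega)]
            · rw [xv_int G ℓ e _ (by omega) (by omega), hin]
              simp only [Fin.val_mk]
              split_ifs <;> omega
          have h3 : χ (xv G ℓ e (i:ℕ)) = if (jc:ℕ)+1 ≤ (i:ℕ) then 1 else 0 := by
            by_cases hc : (i:ℕ) = 0
            · rw [hc, xv_zero, hχ, chiCut_inl, if_neg htv, if_neg (by omega)]
            · rw [xv_int G ℓ e _ (by omega) (by omega), hin]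
              simp only [Fin.val_mk]
              split_ifs <;> omega
          rw [h1, h2, h3]
          split_ifs <;> omega
        by_cases hbot : 1 ≤ (jc:ℕ)
        · right
          refine ⟨⟨(jc:ℕ)-1, by have := jc.isLt; omega⟩, ?_, ?_⟩
          · rw [hval]; simp; omega
          · intro j' hne
            rw [hval j', if_neg]
            intro hc
            apply hne
            apply Fin.ext
            simp
            omega
        · left
          intro j
          rw [hval j, if_neg (by omega)]
    · -- edge not incident to v
      have hchi : ∀ t, χ (xv G ℓ e t) = 0 := by
        intro t
        rcases Nat.eq_zero_or_pos t with rfl | ht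
        · rw [xv_zero, hχ, chiCut_inl, if_neg htv]
        · by_cases hlt : t < ℓ e
          · rw [xv_int G ℓ e t (by omega) hlt, hχ]
            unfold chiCut
            rw [if_neg]
            intro hc
            rcases inCutAt_inr_elim G ℓ hc with ⟨ht', -⟩ | ⟨hh, -⟩
            · exact htv ht'
            · exact hhv hh
          · rw [xv_top G ℓ e t (by omega) (by omega), hχ, chiCut_inl, if_neg hhv]
      have hval : ∀ i : Fin (ℓ e - 1), Mv G ℓ D v (Sum.inr ⟨e, i⟩) = D (Sum.inr ⟨e, i⟩) := by
        intro i
        rw [hMv i, hchi, hchi, hchi]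
        ring
      rcases hD e with hz | ⟨jc, hjc, h0⟩
      · left; intro j; rw [hval j]; exact hz j
      · right
        exact ⟨jc, by rw [hval]; exact hjc, fun j' hne => by rw [hval]; exact h0 j' hne⟩

lemma admPat_rev {L : ℕ} {d : ℕ → ℤ} (h : admPat L d) : admPat L (fun t => d (L - t)) := by
  rcases h with h | ⟨j, hj1, hj2, hdj, h0⟩
  · left
    intro t h1 h2
    dsimp only
    exact h (L - t) (by omega) (by omega)
  · right
    refine ⟨L - j, by omega, by omega, ?_, ?_⟩
    · dsimp only
      rw [show L - (L - j) = j from by omega]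
      exact hdj
    · intro t h1 h2 hne
      dsimp only
      exact h0 (L - t) (by omega) (by omega) (by omega)

lemma divH_interior' (F : VH V E ℓ → ℤ) (e : E) (t : ℕ) (h1 : 1 ≤ t) (h2 : t ≤ ℓ e - 1)
    (h3 : 2 ≤ ℓ e) :
    divH G ℓ F (xv G ℓ e t)
      = (F (xv G ℓ e (t + 1)) - F (xv G ℓ e t)) + (F (xv G ℓ e (t - 1)) - F (xv G ℓ e t)) := by
  have h := divH_interior G ℓ F e ⟨t - 1, by omega⟩
  simp only [Fin.val_mk] at h
  rw [show t - 1 + 2 = t + 1 from by omega, show t - 1 + 1 = t from by omega] at h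
  conv_lhs => rw [xv_int G ℓ e t h1 (by omega)]
  exact h

lemma cut_pos (D f : VH V E ℓ → ℤ) (hD : GAdm G ℓ D)
    (hadm' : GAdm G ℓ (fun w => D w + divH G ℓ f w)) (hf : ∀ w, 0 ≤ f w)
    (v : V) (hfv : 1 ≤ f (Sum.inl v)) :
    ∀ w, inCutAt G ℓ D v w → 1 ≤ f w := by
  intro w hw
  cases w with
  | inl u =>
      have hu : u = v := hw
      rw [hu]; exact hfv
  | inr p =>
      obtain ⟨e, k⟩ := p
      have hk := k.isLt
      have hL2 : 2 ≤ ℓ e := by omega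
      have hd' : admPat (ℓ e) (fun t => (fun w => D w + divH G ℓ f w) (xv G ℓ e t)) :=
        adm_nat G ℓ (A := fun w => D w + divH G ℓ f w) (hadm' e)
      have hsd : ∀ t, 1 ≤ t → t ≤ ℓ e - 1 →
          (fun t => f (xv G ℓ e t)) (t + 1) + (fun t => f (xv G ℓ e t)) (t - 1)
            - 2 * (fun t => f (xv G ℓ e t)) t
          = (fun t => (fun w => D w + divH G ℓ f w) (xv G ℓ e t)) t
            - (fun t => D (xv G ℓ e t)) t := by
        intro t h1 h2
        dsimp only
        rw [divH_interior' G ℓ f e t h1 h2 hL2]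
        ring
      rcases inCutAt_inr_elim G ℓ hw with ⟨htv, jc, hjc, hle⟩ | ⟨hhv, jc, hjc, hle⟩
      · -- tail side
        have hjlt := jc.isLt
        have hdj : D (xv G ℓ e ((jc : ℕ) + 1)) = 1 := by
          rw [xv_coe]; exact hjc
        have hd0 : ∀ t, 1 ≤ t → t ≤ ℓ e - 1 → t ≠ (jc : ℕ) + 1 →
            D (xv G ℓ e t) = 0 := by
          intro t h1 h2 hne
          rw [xv_int G ℓ e t h1 (by omega)]
          rcases hD e with hz | ⟨j0, hj0, h0⟩
          · exact hz _
          · have hj0jc : j0 = jc := by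
              by_contra hne2
              rw [h0 jc (fun hcc => hne2 hcc.symm)] at hjc
              exact absurd hjc (by norm_num)
            apply h0
            rw [hj0jc]
            intro hcc
            have := congrArg Fin.val hcc
            simp at this
            omega
        have hg0 : 1 ≤ f (xv G ℓ e 0) := by
          rw [xv_zero, htv]; exact hfv
        have := seqB (L := ℓ e) (g := fun t => f (xv G ℓ e t))
          (d := fun t => D (xv G ℓ e t))
          (d' := fun t => (fun w => D w + divH G ℓ f w) (xv G ℓ e t))
          hsd (fun t => hf _) hd' ((jc : ℕ) + 1) (by omega) (by omega)
          hdj hd0 hg0 ((k : ℕ) + 1) (by omega) (by have := Fin.le_def.mp hle; omega)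
        have h2 : 1 ≤ f (xv G ℓ e ((k : ℕ) + 1)) := this
        rw [xv_coe] at h2
        exact h2
      · -- head side: mirror
        have hjlt := jc.isLt
        have hsd2 : ∀ t, 1 ≤ t → t ≤ ℓ e - 1 →
            (fun t => f (xv G ℓ e (ℓ e - t))) (t + 1) + (fun t => f (xv G ℓ e (ℓ e - t))) (t - 1)
              - 2 * (fun t => f (xv G ℓ e (ℓ e - t))) t
            = (fun t => (fun w => D w + divH G ℓ f w) (xv G ℓ e (ℓ e - t))) t
              - (fun t => D (xv G ℓ e (ℓ e - t))) t := by
          intro t h1 h2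
          dsimp only
          have e1 : ℓ e - (t + 1) = (ℓ e - t) - 1 := by omega
          have e2 : ℓ e - (t - 1) = (ℓ e - t) + 1 := by omega
          rw [e1, e2, divH_interior' G ℓ f e (ℓ e - t) (by omega) (by omega) hL2]
          ring
        have hd'2 : admPat (ℓ e) (fun t => (fun w => D w + divH G ℓ f w) (xv G ℓ e (ℓ e - t))) :=
          admPat_rev hd'
        have hdj : D (xv G ℓ e (ℓ e - (ℓ e - ((jc : ℕ) + 1)))) = 1 := by
          rw [show ℓ e - (ℓ e - ((jc : ℕ) + 1)) = (jc : ℕ) + 1 from by omega, xv_coe]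
          exact hjc
        have hd0 : ∀ t, 1 ≤ t → t ≤ ℓ e - 1 → t ≠ ℓ e - ((jc : ℕ) + 1) →
            D (xv G ℓ e (ℓ e - t)) = 0 := by
          intro t h1 h2 hne
          rw [xv_int G ℓ e (ℓ e - t) (by omega) (by omega)]
          rcases hD e with hz | ⟨j0, hj0, h0⟩
          · exact hz _
          · have hj0jc : j0 = jc := by
              by_contra hne2
              rw [h0 jc (fun hcc => hne2 hcc.symm)] at hjc
              exact absurd hjc (by norm_num)
            apply h0
            rw [hj0jc]
            intro hcc
            have := congrArg Fin.val hcc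
            simp at this
            omega
        have hg0 : 1 ≤ f (xv G ℓ e (ℓ e - 0)) := by
          rw [show ℓ e - 0 = ℓ e from rfl, xv_top G ℓ e (ℓ e) (by omega) (le_refl _), hhv]
          exact hfv
        have := seqB (L := ℓ e) (g := fun t => f (xv G ℓ e (ℓ e - t)))
          (d := fun t => D (xv G ℓ e (ℓ e - t)))
          (d' := fun t => (fun w => D w + divH G ℓ f w) (xv G ℓ e (ℓ e - t)))
          hsd2 (fun t => hf _) hd'2 (ℓ e - ((jc : ℕ) + 1)) (by omega) (by omega)
          hdj hd0 hg0 (ℓ e - ((k : ℕ) + 1)) (by omega)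
          (by have := Fin.le_def.mp hle; omega)
        have h2 : 1 ≤ f (xv G ℓ e (ℓ e - (ℓ e - ((k : ℕ) + 1)))) := this
        rw [show ℓ e - (ℓ e - ((k : ℕ) + 1)) = (k : ℕ) + 1 from by omega, xv_coe] at h2
        exact h2

lemma exists_vertex_pos (D f : VH V E ℓ → ℤ) (hD : GAdm G ℓ D)
    (hadm' : GAdm G ℓ (fun w => D w + divH G ℓ f w)) (hf : ∀ w, 0 ≤ f w)
    (w0 : VH V E ℓ) (h1 : 1 ≤ f w0) : ∃ v : V, 1 ≤ f (Sum.inl v) := by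
  by_contra hc
  push_neg at hc
  cases w0 with
  | inl u => exact absurd h1 (by have := hc u; omega)
  | inr p =>
      obtain ⟨e, k⟩ := p
      have hk := k.isLt
      have hL2 : 2 ≤ ℓ e := by omega
      have hsd : ∀ t, 1 ≤ t → t ≤ ℓ e - 1 →
          (fun t => f (xv G ℓ e t)) (t + 1) + (fun t => f (xv G ℓ e t)) (t - 1)
            - 2 * (fun t => f (xv G ℓ e t)) t
          = (fun t => (fun w => D w + divH G ℓ f w) (xv G ℓ e t)) t
            - (fun t => D (xv G ℓ e t)) t := by
        intro t ht1 ht2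
        dsimp only
        rw [divH_interior' G ℓ f e t ht1 ht2 hL2]
        ring
      have hg0 : (fun t => f (xv G ℓ e t)) 0 = 0 := by
        dsimp only
        rw [xv_zero]
        have := hc (G.tail e)
        have := hf (Sum.inl (G.tail e))
        omega
      have hgl : (fun t => f (xv G ℓ e t)) (ℓ e) = 0 := by
        dsimp only
        rw [xv_top G ℓ e (ℓ e) (by omega) (le_refl _)]
        have := hc (G.head e)
        have := hf (Sum.inl (G.head e))
        omega
      have hval : 1 ≤ (fun t => f (xv G ℓ e t)) ((k : ℕ) + 1) := by
        dsimp only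
        rw [xv_coe]
        exact h1
      exact seqA hsd (fun t => hf _) (adm_nat G ℓ (A := D) (hD e)) (adm_nat G ℓ (A := fun w => D w + divH G ℓ f w) (hadm' e))
        hg0 hgl ((k : ℕ) + 1) (by omega) hval

lemma chiCut_nonneg (D : VH V E ℓ → ℤ) (v : V) (w : VH V E ℓ) : 0 ≤ chiCut G ℓ D v w := by
  unfold chiCut
  split_ifs <;> norm_num

lemma reach :
    ∀ (n : ℕ) (D : VH V E ℓ → ℤ), GAdm G ℓ D → ∀ f : VH V E ℓ → ℤ, (∀ w, 0 ≤ f w) →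
      GAdm G ℓ (fun w => D w + divH G ℓ f w) → (∑ w : VH V E ℓ, f w).toNat ≤ n →
      ∃ vs : List V, (fun w => D w + divH G ℓ f w) = vs.foldl (fun Dc v => Mv G ℓ Dc v) D := by
  intro n
  induction n with
  | zero =>
      intro D hD f hf hadm' hsum
      refine ⟨[], ?_⟩
      have hs0 : ∑ w : VH V E ℓ, f w = 0 := by
        have := Finset.sum_nonneg (fun w (_ : w ∈ Finset.univ) => hf w)
        omega
      have hfz : ∀ w, f w = 0 := by
        intro w
        have := (Finset.sum_eq_zero_iff_of_nonneg
          (fun w (_ : w ∈ Finset.univ) => hf w)).mp hs0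
        exact this w (Finset.mem_univ w)
      funext w
      rw [show f = (fun _ => (0 : ℤ)) from funext hfz, divH_const]
      simp
  | succ n ih =>
      intro D hD f hf hadm' hsum
      by_cases hz : ∀ w, f w = 0
      · refine ⟨[], ?_⟩
        funext w
        rw [show f = (fun _ => (0 : ℤ)) from funext hz, divH_const]
        simp
      · push_neg at hz
        obtain ⟨w0, hw0⟩ := hz
        have hw1 : 1 ≤ f w0 := by have := hf w0; omega
        obtain ⟨v, hv⟩ := exists_vertex_pos G ℓ D f hD hadm' hf w0 hw1
        have hcut : ∀ w, inCutAt G ℓ D v w → 1 ≤ f w := cut_pos G ℓ D f hD hadm' hf v hv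
        set f₁ : VH V E ℓ → ℤ := fun w => f w - chiCut G ℓ D v w with hf₁def
        have hf₁ : ∀ w, 0 ≤ f₁ w := by
          intro w
          rw [hf₁def]
          dsimp only
          unfold chiCut
          split_ifs with hc
          · have := hcut w hc; omega
          · have := hf w; omega
        have hDkey : ∀ w, Mv G ℓ D v w + divH G ℓ f₁ w = D w + divH G ℓ f w := by
          intro w
          rw [Mv_eq, hf₁def, divH_sub G ℓ f (chiCut G ℓ D v) w]
          ring
        have hD₁ : GAdm G ℓ (Mv G ℓ D v) := GAdm_Mv G ℓ D hD v
        have hadm₁ : GAdm G ℓ (fun w => Mv G ℓ D v w + divH G ℓ f₁ w) := by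
          rw [show (fun w => Mv G ℓ D v w + divH G ℓ f₁ w)
            = (fun w => D w + divH G ℓ f w) from funext hDkey]
          exact hadm'
        have hchip : 1 ≤ ∑ w : VH V E ℓ, chiCut G ℓ D v w := by
          have h1 : chiCut G ℓ D v (Sum.inl v) = 1 := by
            rw [chiCut_inl, if_pos rfl]
          calc (1 : ℤ) = chiCut G ℓ D v (Sum.inl v) := h1.symm
          _ ≤ ∑ w : VH V E ℓ, chiCut G ℓ D v w :=
              Finset.single_le_sum (fun w _ => chiCut_nonneg G ℓ D v w)
                (Finset.mem_univ (Sum.inl v))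
        have hs1 : ∑ w : VH V E ℓ, f₁ w
            = (∑ w : VH V E ℓ, f w) - ∑ w : VH V E ℓ, chiCut G ℓ D v w := by
          rw [hf₁def]
          exact Finset.sum_sub_distrib f (chiCut G ℓ D v)
        have hsn : (∑ w : VH V E ℓ, f₁ w).toNat ≤ n := by
          have h0 : 0 ≤ ∑ w : VH V E ℓ, f₁ w :=
            Finset.sum_nonneg (fun w _ => hf₁ w)
          have h0' : 0 ≤ ∑ w : VH V E ℓ, f w :=
            Finset.sum_nonneg (fun w (_ : w ∈ Finset.univ) => hf w)
          omega
        obtain ⟨vs, hvs⟩ := ih (Mv G ℓ D v) hD₁ f₁ hf₁ hadm₁ hsn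
        refine ⟨v :: vs, ?_⟩
        rw [show (fun w => D w + divH G ℓ f w)
          = (fun w => Mv G ℓ D v w + divH G ℓ f₁ w) from (funext hDkey).symm, hvs]
        rfl

end Graph

/-- if `D` and `D'` are `G`-admissible divisors on `H` that are linearly
equivalent, then `D'` is obtained from `D` by a finite sequence of `G`-admissible
chip-firing moves: `D' = M_{v_N}(⋯(M_{v_1}(D))⋯)` for some vertices `v₁, …, v_N`. -/
theorem stmt5 (G : Multigraph V E) (hG : G.Conn) (ℓ : E → ℕ) (hℓ : ∀ e, 0 < ℓ e)
    (D : VH V E ℓ → ℤ) (hD : GAdm G ℓ D)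
    (D' : VH V E ℓ → ℤ) (hD' : GAdm G ℓ D')
    (hequiv : ∃ F : VH V E ℓ → ℤ, ∀ w, D' w = D w + divH G ℓ F w) :
    ∃ vs : List V, D' = vs.foldl (fun Dc v => Mv G ℓ Dc v) D := by
  obtain ⟨F, hF⟩ := hequiv
  have hconn : G.adjG.Connected := hG
  obtain ⟨v₀⟩ := hconn.nonempty
  obtain ⟨w₀, -, hw₀⟩ := Finset.exists_min_image (Finset.univ : Finset (VH V E ℓ)) F
    ⟨Sum.inl v₀, Finset.mem_univ _⟩
  have hf : ∀ w, 0 ≤ F w - F w₀ := fun w => by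
    have := hw₀ w (Finset.mem_univ w); omega
  have hdiv : ∀ w, divH G ℓ (fun w' => F w' - F w₀) w = divH G ℓ F w := by
    intro w
    rw [divH_sub G ℓ F (fun _ => F w₀) w, divH_const]
    ring
  have hD'eq : D' = fun w => D w + divH G ℓ (fun w' => F w' - F w₀) w := by
    funext w
    rw [hdiv w]
    exact hF w
  have hadm' : GAdm G ℓ (fun w => D w + divH G ℓ (fun w' => F w' - F w₀) w) := by
    rw [← hD'eq]; exact hD'
  obtain ⟨vs, hvs⟩ := reach G ℓ ((∑ w : VH V E ℓ, (F w - F w₀)).toNat) D hD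
    (fun w => F w - F w₀) hf hadm' (le_refl _)
  exact ⟨vs, hD'eq.trans hvs⟩
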